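/- Let M be an invertible n×n real matrix, W an invertible diagonal n×n matrix with positive diagonal entries, 𝟙 the m×1 vector of ones, M̲ = M ⊗ 𝟙 and W̲ = W ⊗ I_m. Then the weighted least squares hat matrix equals the ordinary least squares hat matrix: M̲(M̲ᵀ W̲ M̲)⁻¹ M̲ᵀ W̲ = M̲(M̲ᵀ M̲)⁻¹ M̲ᵀ = (1/m)(Iₙ ⊗ 𝟙𝟙ᵀ). -/
import Mathlib


open Matrix
open scoped Kronecker

private lemma key_cancel {n : ℕ} (M W : Matrix (Fin n) (Fin n) ℝ)
    (hM : IsUnit M.det) (hW : IsUnit W.det) :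
    M * (Mᵀ * W * M)⁻¹ * Mᵀ * W = 1 := by
  have hMt : IsUnit Mᵀ.det := by rwa [Matrix.det_transpose]
  rw [Matrix.mul_inv_rev, Matrix.mul_inv_rev]
  simp only [Matrix.mul_assoc]
  rw [Matrix.mul_nonsing_inv_cancel_left M _ hM,
    Matrix.nonsing_inv_mul_cancel_left Mᵀ _ hMt, Matrix.nonsing_inv_mul W hW]

private lemma hat_formula {n m : ℕ} (hm : 0 < m)
    (M W : Matrix (Fin n) (Fin n) ℝ) (hM : IsUnit M.det) (hW : IsUnit W.det)
    (ones : Matrix (Fin m) (Fin 1) ℝ) (hones : ∀ i j, ones i j = 1) :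
    (M ⊗ₖ ones) * (((M ⊗ₖ ones)ᵀ * (W ⊗ₖ (1 : Matrix (Fin m) (Fin m) ℝ)) * (M ⊗ₖ ones))⁻¹)
      * (M ⊗ₖ ones)ᵀ * (W ⊗ₖ (1 : Matrix (Fin m) (Fin m) ℝ)) =
      (1 / (m : ℝ)) • ((1 : Matrix (Fin n) (Fin n) ℝ) ⊗ₖ (ones * onesᵀ)) := by
  have hmR : ((m : ℝ)) ≠ 0 := by positivity
  have hT : (M ⊗ₖ ones)ᵀ = Mᵀ ⊗ₖ onesᵀ := (Matrix.kroneckerMap_transpose _ _ _).symm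
  have hS : onesᵀ * ones = (m : ℝ) • (1 : Matrix (Fin 1) (Fin 1) ℝ) := by
    ext i j
    have : i = j := Subsingleton.elim i j
    subst this
    simp [Matrix.mul_apply, hones, Matrix.one_apply]
  have hSinv : (onesᵀ * ones)⁻¹ = (m : ℝ)⁻¹ • (1 : Matrix (Fin 1) (Fin 1) ℝ) := by
    apply Matrix.inv_eq_right_inv
    rw [hS, smul_mul_assoc, Matrix.mul_smul, Matrix.one_mul, smul_smul,
      mul_inv_cancel₀ hmR, one_smul]
  have hmid : (M ⊗ₖ ones)ᵀ * (W ⊗ₖ (1 : Matrix (Fin m) (Fin m) ℝ)) * (M ⊗ₖ ones)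
      = (Mᵀ * W * M) ⊗ₖ (onesᵀ * ones) := by
    rw [hT, ← Matrix.mul_kronecker_mul, ← Matrix.mul_kronecker_mul, Matrix.mul_one]
  rw [hmid, Matrix.inv_kronecker, hSinv, hT,
    ← Matrix.mul_kronecker_mul, ← Matrix.mul_kronecker_mul, ← Matrix.mul_kronecker_mul]
  have h1 : M * (Mᵀ * W * M)⁻¹ * Mᵀ * W = 1 := key_cancel M W hM hW
  have h2 : ones * ((m : ℝ)⁻¹ • (1 : Matrix (Fin 1) (Fin 1) ℝ)) * onesᵀ
      * (1 : Matrix (Fin m) (Fin m) ℝ) = (m : ℝ)⁻¹ • (ones * onesᵀ) := by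
    rw [Matrix.mul_one, Matrix.mul_smul, Matrix.mul_one, Matrix.smul_mul]
  rw [h1, h2, Matrix.kronecker_smul, one_div]

/-- With a full square Vandermonde-type model whose rows are each repeated `m` times,
the weighted least squares hat matrix equals the ordinary least squares hat matrix,
and both equal `(1/m) (Iₙ ⊗ 𝟙𝟙ᵀ)`. -/
theorem wls_hat_eq_ols_hat {n m : ℕ} (hm : 0 < m)
    (M : Matrix (Fin n) (Fin n) ℝ) (hM : IsUnit M.det)
    (w : Fin n → ℝ) (hw : ∀ i, 0 < w i)
    (W : Matrix (Fin n) (Fin n) ℝ) (hW : W = Matrix.diagonal w)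
    (ones : Matrix (Fin m) (Fin 1) ℝ) (hones : ∀ i j, ones i j = 1)
    (Mb : Matrix (Fin n × Fin m) (Fin n × Fin 1) ℝ) (hMb : Mb = M ⊗ₖ ones)
    (Wb : Matrix (Fin n × Fin m) (Fin n × Fin m) ℝ)
    (hWb : Wb = W ⊗ₖ (1 : Matrix (Fin m) (Fin m) ℝ)) :
    Mb * (Mbᵀ * Wb * Mb)⁻¹ * Mbᵀ * Wb = Mb * (Mbᵀ * Mb)⁻¹ * Mbᵀ ∧
      Mb * (Mbᵀ * Wb * Mb)⁻¹ * Mbᵀ * Wb =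
        (1 / (m : ℝ)) • ((1 : Matrix (Fin n) (Fin n) ℝ) ⊗ₖ (ones * onesᵀ)) := by
  have hWdet : IsUnit W.det := by
    rw [hW, Matrix.det_diagonal]
    refine isUnit_iff_ne_zero.mpr (Finset.prod_ne_zero_iff.mpr fun i _ => (hw i).ne')
  subst hMb hWb
  have hwls := hat_formula hm M W hM hWdet ones hones
  have hols := hat_formula hm M 1 hM (by simp) ones hones
  rw [Matrix.one_kronecker_one] at hols
  simp only [Matrix.mul_one] at hols
  refine ⟨?_, hwls⟩
  rw [hwls, ← hols]
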